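/- Let a, b, c ≥ 1 be integers with gcd(a,b) = 1, let μ ∈ ℤ with gcd(μ, 2abc²) = 1, and let d be a positive integer with d ≡ μ² (mod 4abc²). Let α be a nonzero squarefree integer dividing 2ac and let p, q ∈ ℤ satisfy α·p² − α·d·q² = 4ac. Then 2ac² divides (2ac + α·d·q²) − μ·α·p·q if and only if α divides 2a and (4ac²/α) divides (p − μq)² (equivalently, 4ac² divides α(p − μq)²). -/

import Mathlib

/-- If `π` is prime and `π ^ (2n+1) ∣ r ^ 2`, then `π ^ (n+1) ∣ r`. -/
lemma aux_pow_dvd_of_pow_odd_dvd_sq {π : ℤ} (hπ : Prime π) :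
    ∀ (n : ℕ) (r : ℤ), π ^ (2 * n + 1) ∣ r ^ 2 → π ^ (n + 1) ∣ r := by
  intro n
  induction n with
  | zero =>
    intro r h
    have h1 : π ∣ r ^ 2 := by simpa using h
    simpa using hπ.dvd_of_dvd_pow h1
  | succ m ih =>
    intro r h
    have hπr : π ∣ r := by
      refine hπ.dvd_of_dvd_pow (n := 2) ?_
      exact dvd_trans (dvd_pow_self π (Nat.succ_ne_zero _)) h
    obtain ⟨s, rfl⟩ := hπr
    have h2 : π ^ 2 * π ^ (2 * m + 1) ∣ π ^ 2 * s ^ 2 := by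
      have : π ^ 2 * π ^ (2 * m + 1) = π ^ (2 * (m + 1) + 1) := by ring
      rw [this]
      exact h.trans (dvd_of_eq (by ring))
    have h3 : π ^ (2 * m + 1) ∣ s ^ 2 :=
      (mul_dvd_mul_iff_left (pow_ne_zero 2 hπ.ne_zero)).mp h2
    have h4 : π ^ (m + 1) ∣ s := ih s h3
    obtain ⟨t, rfl⟩ := h4
    exact ⟨t, by ring⟩

/-- A squarefree natural number divides any nonzero number divisible by each of its
prime factors. -/
lemma aux_squarefree_dvd_of_prime_dvd {m k : ℕ} (hm : Squarefree m) (hk : k ≠ 0)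
    (h : ∀ p : ℕ, p.Prime → p ∣ m → p ∣ k) : m ∣ k := by
  have hm0 : m ≠ 0 := hm.ne_zero
  rw [← Nat.factorization_le_iff_dvd hm0 hk]
  intro p
  by_cases hp : p.Prime
  · by_cases hpm : p ∣ m
    · have h1 : m.factorization p ≤ 1 := hm.natFactorization_le_one p
      have h2 : 1 ≤ k.factorization p := hp.factorization_pos_of_dvd hk (h p hp hpm)
      omega
    · have : m.factorization p = 0 := Nat.factorization_eq_zero_of_not_dvd hpm
      omega
  · have : m.factorization p = 0 := Nat.factorization_eq_zero_of_not_prime m hp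
    omega

/-- equivalence (3.1.30) ⇔ (3.1.38) in the proof of Theorem 3.1.4.
Let `a, b, c ≥ 1` with `gcd(a,b) = 1`, `μ` with `gcd(μ, 2abc²) = 1`, and `d > 0` with
`d ≡ μ² (mod 4abc²)`.  Let `α` be a nonzero squarefree integer dividing `2ac` and `p, q`
satisfy `αp² − αdq² = 4ac`.  Then `2ac² ∣ (2ac + αdq²) − μ·αpq` if and only if
`α ∣ 2a` and `4ac² ∣ α(p − μq)²` (equivalently, `(4ac²/α) ∣ (p − μq)²`). -/
theorem congruence_iff_alpha_dvd_and_square_dvd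
    (a b c : ℤ) (ha : 1 ≤ a) (hb : 1 ≤ b) (hc : 1 ≤ c)
    (hab : Int.gcd a b = 1)
    (μ : ℤ) (hμ : Int.gcd μ (2 * a * b * c ^ 2) = 1)
    (d : ℤ) (hd : 0 < d) (hdμ : (4 * a * b * c ^ 2) ∣ (d - μ ^ 2))
    (α : ℤ) (hα0 : α ≠ 0) (hαsf : Squarefree α) (hαdvd : α ∣ 2 * a * c)
    (p q : ℤ) (hpq : α * p ^ 2 - α * d * q ^ 2 = 4 * a * c) :
    (2 * a * c ^ 2) ∣ ((2 * a * c + α * d * q ^ 2) - μ * (α * p * q)) ↔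
      (α ∣ 2 * a ∧ (4 * a * c ^ 2) ∣ α * (p - μ * q) ^ 2) := by
  obtain ⟨k, hk⟩ := hdμ
  have hc0 : c ≠ 0 := by positivity
  -- the key algebraic identity (uses `hpq`)
  have hident : α * (p - μ * q) ^ 2 =
      2 * ((2 * a * c + α * d * q ^ 2) - μ * (α * p * q)) - α * q ^ 2 * (d - μ ^ 2) := by
    linear_combination hpq
  have hdvd1 : (4 * a * c ^ 2) ∣ α * q ^ 2 * (d - μ ^ 2) :=
    ⟨α * q ^ 2 * b * k, by rw [hk]; ring⟩
  -- the square-divisibility condition alone is equivalent to the congruence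
  have hsq_iff : (2 * a * c ^ 2) ∣ ((2 * a * c + α * d * q ^ 2) - μ * (α * p * q)) ↔
      (4 * a * c ^ 2) ∣ α * (p - μ * q) ^ 2 := by
    constructor
    · rintro ⟨m, hm⟩
      have h2X : (4 * a * c ^ 2) ∣
          2 * ((2 * a * c + α * d * q ^ 2) - μ * (α * p * q)) := ⟨m, by rw [hm]; ring⟩
      rw [hident]
      exact dvd_sub h2X hdvd1
    · intro hsq
      have h2X : (4 * a * c ^ 2) ∣
          2 * ((2 * a * c + α * d * q ^ 2) - μ * (α * p * q)) := by
        have : 2 * ((2 * a * c + α * d * q ^ 2) - μ * (α * p * q)) =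
            α * (p - μ * q) ^ 2 + α * q ^ 2 * (d - μ ^ 2) := by
          linear_combination hident - 2 * hpq
        rw [this]
        exact dvd_add hsq hdvd1
      obtain ⟨m, hm⟩ := h2X
      refine ⟨m, ?_⟩
      have h2 : (2 : ℤ) * ((2 * a * c + α * d * q ^ 2) - μ * (α * p * q)) =
          2 * (2 * a * c ^ 2 * m) := by rw [hm]; ring
      exact mul_left_cancel₀ two_ne_zero h2
  -- the hard implication: the square-divisibility forces `α ∣ 2a`
  have halpha : (4 * a * c ^ 2) ∣ α * (p - μ * q) ^ 2 → α ∣ 2 * a := by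
    intro hsq
    -- every prime dividing α divides 2a
    have hprime : ∀ π : ℤ, Prime π → π ∣ α → π ∣ 2 * a := by
      intro π hπ hπα
      by_contra hnd
      have hπ4a : ¬ π ∣ 4 * a := by
        intro h
        have h' : π ∣ 2 * (2 * a) := by
          have : (4 : ℤ) * a = 2 * (2 * a) := by ring
          rwa [this] at h
        rcases hπ.dvd_mul.mp h' with h2 | h2a
        · exact hnd (dvd_mul_of_dvd_left h2 a)
        · exact hnd h2a
      have hcop4a : IsCoprime π (4 * a) := hπ.coprime_iff_not_dvd.mpr hπ4a
      obtain ⟨g, hg⟩ := hπα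
      have hπg : ¬ π ∣ g := by
        intro h
        obtain ⟨t, ht⟩ := h
        exact hπ.not_unit (hαsf π ⟨t, by rw [hg, ht]; ring⟩)
      have hcopg : IsCoprime π g := hπ.coprime_iff_not_dvd.mpr hπg
      have key : ∀ n : ℕ, π ^ n ∣ c := by
        intro n
        induction n with
        | zero => simp
        | succ n ih =>
          -- first, π ^ n ∣ p - μq
          have hr : π ^ n ∣ (p - μ * q) := by
            rcases n with _ | m
            · simp
            · have hc2 : π ^ (2 * (m + 1)) ∣ c ^ 2 := by
                have := pow_dvd_pow_of_dvd ih 2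
                rwa [← pow_mul, mul_comm (m + 1) 2] at this
              have h1 : π ^ (2 * (m + 1)) ∣ α * (p - μ * q) ^ 2 :=
                (hc2.trans (dvd_mul_left (c ^ 2) (4 * a))).trans hsq
              have h2 : π ^ (2 * (m + 1)) ∣ (π * (p - μ * q) ^ 2) * g := by
                have heq : α * (p - μ * q) ^ 2 = (π * (p - μ * q) ^ 2) * g := by
                  rw [hg]; ring
                rwa [heq] at h1
              have h3 : π ^ (2 * (m + 1)) ∣ π * (p - μ * q) ^ 2 :=
                (hcopg.pow_left).dvd_of_dvd_mul_right h2
              have h4 : π ^ (2 * m + 1) ∣ (p - μ * q) ^ 2 := by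
                have heq : π ^ (2 * (m + 1)) = π * π ^ (2 * m + 1) := by ring
                rw [heq] at h3
                exact (mul_dvd_mul_iff_left hπ.ne_zero).mp h3
              exact aux_pow_dvd_of_pow_odd_dvd_sq hπ m _ h4
          -- second, π ^ n ∣ d - μ²
          have hdm : π ^ n ∣ (d - μ ^ 2) := by
            have hcd : c ∣ (d - μ ^ 2) := ⟨4 * a * b * c * k, by rw [hk]; ring⟩
            exact ih.trans hcd
          -- now α πⁿ ∣ 4ac
          have h5 : α * π ^ n ∣ 4 * a * c := by
            have heq : 4 * a * c =
                (α * (p - μ * q)) * (p + μ * q) - (α * q ^ 2) * (d - μ ^ 2) := by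
              linear_combination -hpq
            rw [heq]
            refine dvd_sub ?_ ?_
            · exact (mul_dvd_mul_left α hr).mul_right (p + μ * q)
            · exact mul_dvd_mul (dvd_mul_right α (q ^ 2)) hdm
          have h6 : π ^ (n + 1) ∣ 4 * a * c := by
            refine (Dvd.intro g ?_).trans h5
            rw [hg]; ring
          have h7 : π ^ (n + 1) ∣ (4 * a) * c := by
            have : (4 : ℤ) * a * c = (4 * a) * c := by ring
            rwa [this] at h6
          exact (hcop4a.pow_left).dvd_of_dvd_mul_left h7
      -- contradiction via growth of powers
      have hπabs : π.natAbs.Prime := Int.prime_iff_natAbs_prime.mp hπ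
      have h2le : 2 ≤ π.natAbs := hπabs.two_le
      set n := c.natAbs with hn
      have hnpos : 0 < n := Int.natAbs_pos.mpr hc0
      have hdvdn : π.natAbs ^ n ∣ n := by
        have := key n
        have h' : π.natAbs ^ n ∣ c.natAbs := by
          rw [← Int.natAbs_pow]
          exact Int.natAbs_dvd_natAbs.mpr this
        exact h'
      have hle : π.natAbs ^ n ≤ n := Nat.le_of_dvd hnpos hdvdn
      have hlt : n < 2 ^ n := Nat.lt_two_pow_self (n := n)
      have hle2 : 2 ^ n ≤ π.natAbs ^ n := Nat.pow_le_pow_left h2le n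
      omega
    -- assemble: α.natAbs ∣ (2a).natAbs
    have hsf : Squarefree α.natAbs := Int.squarefree_natAbs.mpr hαsf
    have h2a0 : (2 * a).natAbs ≠ 0 := by
      simp only [ne_eq, Int.natAbs_eq_zero]
      intro h
      have : a = 0 := by omega
      omega
    have hdvdnat : α.natAbs ∣ (2 * a).natAbs := by
      refine aux_squarefree_dvd_of_prime_dvd hsf h2a0 ?_
      intro pp hpp hppα
      have hppZ : Prime (pp : ℤ) := Nat.prime_iff_prime_int.mp hpp
      have hppαZ : (pp : ℤ) ∣ α :=
        (Int.natCast_dvd_natCast.mpr hppα).trans (Int.natAbs_dvd.mpr dvd_rfl)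
      have := hprime (pp : ℤ) hppZ hppαZ
      simpa using Int.natAbs_dvd_natAbs.mpr this
    exact Int.natAbs_dvd_natAbs.mp hdvdnat
  constructor
  · intro h
    exact ⟨halpha (hsq_iff.mp h), hsq_iff.mp h⟩
  · rintro ⟨_, hsq⟩
    exact hsq_iff.mpr hsq
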